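/- arXiv:0907.5446 — 4 statements merged into one kernel-verified Lean document; each statement's English description precedes it below -/
import Mathlib

section
/- Let f(x) = x·log x - x + 1. For every γ ∈ (0,1), every r ∈ [γ,1], and every x > 0, one has f(x) ≤ f(r·x + 1 - r) / f(1 - γ). -/
open Real Set

private lemma hasDerivAt_fun (y : ℝ) (hy : y ≠ 0) :
    HasDerivAt (fun u : ℝ => u * Real.log u - u + 1) (Real.log y) y := by
  have h := (Real.hasDerivAt_mul_log hy).sub (hasDerivAt_id y)
  have h2 := h.add_const 1
  convert h2 using 1 <;> first | rfl | ring

private lemma fun_continuous : Continuous (fun u : ℝ => u * Real.log u - u + 1) :=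
  (Real.continuous_mul_log.sub continuous_id).add continuous_const

private lemma f_mono : MonotoneOn (fun u : ℝ => u * Real.log u - u + 1) (Set.Ici 1) := by
  apply monotoneOn_of_hasDerivWithinAt_nonneg (convex_Ici 1) fun_continuous.continuousOn
    (f' := fun u => Real.log u)
  · intro y hy
    rw [interior_Ici] at hy
    exact (hasDerivAt_fun y (lt_trans one_pos hy).ne' |>.hasDerivWithinAt)
  · intro y hy
    rw [interior_Ici] at hy
    exact Real.log_nonneg hy.le
  
private lemma f_anti : AntitoneOn (fun u : ℝ => u * Real.log u - u + 1) (Set.Ioc 0 1) := by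
  apply antitoneOn_of_hasDerivWithinAt_nonpos (convex_Ioc 0 1) fun_continuous.continuousOn
    (f' := fun u => Real.log u)
  · intro y hy
    rw [interior_Ioc] at hy
    exact (hasDerivAt_fun y hy.1.ne' |>.hasDerivWithinAt)
  · intro y hy
    rw [interior_Ioc] at hy
    exact Real.log_nonpos hy.1.le hy.2.le

private lemma key (γ : ℝ) (hγ0 : 0 < γ) (hγ1 : γ < 1) (x : ℝ) (hx : 0 < x) :
    ((1-γ) * Real.log (1-γ) - (1-γ) + 1) * (x * Real.log x - x + 1)
      ≤ (γ*x+1-γ) * Real.log (γ*x+1-γ) - (γ*x+1-γ) + 1 := by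
  have h1γ : 0 < 1 - γ := by linarith
  set c : ℝ := (1-γ) * Real.log (1-γ) - (1-γ) + 1 with hc
  -- bounds on c
  have hlt : Real.log (1-γ) < -γ := by
    have := Real.log_lt_sub_one_of_pos h1γ (by linarith)
    linarith
  have hc2 : c < γ^2 := by nlinarith [hlt, h1γ]
  have hc0 : 0 < c := by
    have hinv := Real.log_lt_sub_one_of_pos (by positivity : (0:ℝ) < (1-γ)⁻¹)
      (by
        intro h
        have : (1-γ) = 1 := by
          field_simp at h
          linarith
        linarith)
    rw [Real.log_inv] at hinv
    have h2 : (1-γ) * ((1-γ)⁻¹ - 1) = 1 - (1-γ) := by field_simp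
    nlinarith [mul_lt_mul_of_pos_left hinv h1γ]
  have hcγ : c < γ := by nlinarith
  -- the difference function
  set G : ℝ → ℝ := fun y => (γ*y+1-γ) * Real.log (γ*y+1-γ) - (γ*y+1-γ) + 1
      - c * (y * Real.log y - y + 1) with hG
  set G' : ℝ → ℝ := fun y => γ * Real.log (γ*y+1-γ) - c * Real.log y with hG'
  have hupos : ∀ y : ℝ, 0 < y → 0 < γ*y+1-γ := by intro y hy; nlinarith
  have hG1 : G 1 = 0 := by
    simp only [hG]
    norm_num
  have hG0 : G 0 = 0 := by
    simp only [hG]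
    norm_num [hc]
  have hG'1 : G' 1 = 0 := by
    simp only [hG']
    norm_num
  have hGd : ∀ y : ℝ, 0 < y → HasDerivAt G (G' y) y := by
    intro y hy
    have hu := hupos y hy
    have h1 : HasDerivAt (fun z : ℝ => γ*z+1-γ) γ y := by
      have := (((hasDerivAt_id y).const_mul γ).add_const 1).sub_const γ
      simpa using this
    have hcomp := (hasDerivAt_fun _ hu.ne').comp y h1
    have hfy := (hasDerivAt_fun y hy.ne').const_mul c
    have := hcomp.sub hfy
    convert this using 1 <;> first | rfl | (simp [Function.comp, hG']; ring)
  have hG'd : ∀ y : ℝ, 0 < y → HasDerivAt G' (γ^2/(γ*y+1-γ) - c/y) y := by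
    intro y hy
    have hu := hupos y hy
    have h1 : HasDerivAt (fun z : ℝ => γ*z+1-γ) γ y := by
      have := (((hasDerivAt_id y).const_mul γ).add_const 1).sub_const γ
      simpa using this
    have hlog := (Real.hasDerivAt_log hu.ne').comp y h1
    have h2 := (hlog.const_mul γ).sub ((Real.hasDerivAt_log hy.ne').const_mul c)
    convert h2 using 1 <;> first | rfl | (simp only [div_eq_mul_inv]; ring)
  have hGc : Continuous G := by
    have h1 : Continuous fun z : ℝ => γ*z+1-γ := by continuity
    exact ((fun_continuous.comp h1).sub (continuous_const.mul fun_continuous))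
  -- final goal is 0 ≤ G x
  have hgoal : ∀ y : ℝ, 0 ≤ G y →
      c * (y * Real.log y - y + 1) ≤ (γ*y+1-γ) * Real.log (γ*y+1-γ) - (γ*y+1-γ) + 1 := by
    intro y h
    simp only [hG] at h
    linarith
  apply hgoal
  rcases le_or_gt 1 x with hx1 | hx1
  · -- x ≥ 1 : G' monotone on [1,∞), G'(1)=0, so G monotone, G(1)=0
    have hG'mono : MonotoneOn G' (Set.Ici 1) := by
      apply monotoneOn_of_hasDerivWithinAt_nonneg (convex_Ici 1)
        (f' := fun y => γ^2/(γ*y+1-γ) - c/y)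
      · intro y hy
        exact ((hG'd y (lt_of_lt_of_le one_pos hy)).continuousAt.continuousWithinAt)
      · intro y hy
        rw [interior_Ici] at hy
        exact (hG'd y (lt_trans one_pos hy)).hasDerivWithinAt
      · intro y hy
        rw [interior_Ici] at hy
        have hy0 : (0:ℝ) < y := lt_trans one_pos hy
        have hu := hupos y hy0
        rw [sub_nonneg, div_le_div_iff₀ hy0 hu]
        nlinarith [mul_nonneg (mul_nonneg hγ0.le (sub_pos.2 hcγ).le) (sub_nonneg.2 hy.le)]
    have hGmono : MonotoneOn G (Set.Ici 1) := by
      apply monotoneOn_of_hasDerivWithinAt_nonneg (convex_Ici 1) hGc.continuousOn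
        (f' := G')
      · intro y hy
        rw [interior_Ici] at hy
        exact (hGd y (lt_trans one_pos hy)).hasDerivWithinAt
      · intro y hy
        rw [interior_Ici] at hy
        have := hG'mono (Set.self_mem_Ici) (le_of_lt hy : (1:ℝ) ≤ y) hy.le
        rw [hG'1] at this
        exact this
    have := hGmono (Set.self_mem_Ici) hx1 hx1
    rw [hG1] at this
    exact this
  · -- x < 1
    set x₀ : ℝ := c*(1-γ)/(γ*(γ-c)) with hx₀
    have hden : 0 < γ*(γ-c) := mul_pos hγ0 (sub_pos.2 hcγ)
    have hx₀0 : 0 < x₀ := div_pos (mul_pos hc0 h1γ) hden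
    have hx₀1 : x₀ < 1 := by
      rw [hx₀, div_lt_one hden]
      nlinarith
    have hx₀y : ∀ y : ℝ, x₀ ≤ y → c*(γ*y+1-γ) ≤ γ^2*y := by
      intro y hy
      have h := (div_le_iff₀ hden).1 hy  -- wrong direction? x₀ ≤ y : c(1-γ)/(γ(γ-c)) ≤ y
      -- use: c*(1-γ) ≤ y * (γ*(γ-c))
      have h2 : c*(1-γ) ≤ y * (γ*(γ-c)) := (div_le_iff₀ hden).1 hy
      nlinarith
    have hyx₀ : ∀ y : ℝ, y ≤ x₀ → γ^2*y ≤ c*(γ*y+1-γ) := by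
      intro y hy
      have h2 : y * (γ*(γ-c)) ≤ c*(1-γ) := (le_div_iff₀ hden).1 hy
      nlinarith
    -- G antitone on [x₀, 1]
    have hG'mono : MonotoneOn G' (Set.Icc x₀ 1) := by
      apply monotoneOn_of_hasDerivWithinAt_nonneg (convex_Icc x₀ 1)
        (f' := fun y => γ^2/(γ*y+1-γ) - c/y)
      · intro y hy
        have hy0 : 0 < y := lt_of_lt_of_le hx₀0 hy.1
        exact ((hG'd y hy0).continuousAt.continuousWithinAt)
      · intro y hy
        rw [interior_Icc] at hy
        exact (hG'd y (lt_trans hx₀0 hy.1)).hasDerivWithinAt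
      · intro y hy
        rw [interior_Icc] at hy
        have hy0 : 0 < y := lt_trans hx₀0 hy.1
        have hu := hupos y hy0
        rw [sub_nonneg, div_le_div_iff₀ hy0 hu]
        have := hx₀y y hy.1.le
        nlinarith
    have hGanti : AntitoneOn G (Set.Icc x₀ 1) := by
      apply antitoneOn_of_hasDerivWithinAt_nonpos (convex_Icc x₀ 1) hGc.continuousOn
        (f' := G')
      · intro y hy
        rw [interior_Icc] at hy
        exact (hGd y (lt_trans hx₀0 hy.1)).hasDerivWithinAt
      · intro y hy
        rw [interior_Icc] at hy
        have := hG'mono ⟨hy.1.le, hy.2.le⟩ ⟨hx₀1.le, le_refl 1⟩ hy.2.le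
        rw [hG'1] at this
        exact this
    have hGx₀ : 0 ≤ G x₀ := by
      have := hGanti ⟨le_refl x₀, hx₀1.le⟩ ⟨hx₀1.le, le_refl 1⟩ hx₀1.le
      rw [hG1] at this
      exact this
    rcases le_or_gt x₀ x with hxx | hxx
    · have := hGanti ⟨hxx, hx1.le⟩ ⟨hx₀1.le, le_refl 1⟩ hx1.le
      rw [hG1] at this
      exact this
    · -- x < x₀ : concavity on [0, x₀]
      have hconc : ConcaveOn ℝ (Set.Icc 0 x₀) G := by
        apply concaveOn_of_hasDerivWithinAt2_nonpos (convex_Icc 0 x₀) hGc.continuousOn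
          (f' := G') (f'' := fun y => γ^2/(γ*y+1-γ) - c/y)
        · intro y hy
          rw [interior_Icc] at hy
          exact (hGd y hy.1).hasDerivWithinAt
        · intro y hy
          rw [interior_Icc] at hy
          exact (hG'd y hy.1).hasDerivWithinAt
        · intro y hy
          rw [interior_Icc] at hy
          have hu := hupos y hy.1
          rw [sub_nonpos, div_le_div_iff₀ hu hy.1]
          have := hyx₀ y hy.2.le
          nlinarith
      have hmem : x ∈ segment ℝ (0:ℝ) x₀ := by
        rw [segment_eq_Icc hx₀0.le]
        exact ⟨hx.le, hxx.le⟩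
      have := hconc.ge_on_segment (⟨le_refl 0, hx₀0.le⟩ : (0:ℝ) ∈ Set.Icc 0 x₀)
        ⟨hx₀0.le, le_refl x₀⟩ hmem
      rw [hG0] at this
      exact le_trans (le_min le_rfl hGx₀) this

theorem f_le_f_div_f (f : ℝ → ℝ) (hf : ∀ x, f x = x * Real.log x - x + 1)
    (γ : ℝ) (hγ0 : 0 < γ) (hγ1 : γ < 1) (r : ℝ) (hr1 : γ ≤ r) (hr2 : r ≤ 1)
    (x : ℝ) (hx : 0 < x) :
    f x ≤ f (r * x + 1 - r) / f (1 - γ) := by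
  have h1γ : 0 < 1 - γ := by linarith
  have hc0 : 0 < f (1-γ) := by
    rw [hf]
    have hinv := Real.log_lt_sub_one_of_pos (by positivity : (0:ℝ) < (1-γ)⁻¹)
      (by
        intro h
        have : (1-γ) = 1 := by
          field_simp at h
          linarith
        linarith)
    rw [Real.log_inv] at hinv
    have h2 : (1-γ) * ((1-γ)⁻¹ - 1) = 1 - (1-γ) := by field_simp
    nlinarith [mul_lt_mul_of_pos_left hinv h1γ]
  rw [le_div_iff₀ hc0]
  have hkey := key γ hγ0 hγ1 x hx
  rw [hf x, hf (1-γ), hf (r*x+1-r)]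
  have hr0 : 0 < r := lt_of_lt_of_le hγ0 hr1
  have hmid : (γ*x+1-γ) * Real.log (γ*x+1-γ) - (γ*x+1-γ) + 1
      ≤ (r*x+1-r) * Real.log (r*x+1-r) - (r*x+1-r) + 1 := by
    rcases le_or_gt 1 x with hx1 | hx1
    · have h1 : (1:ℝ) ≤ γ*x+1-γ := by nlinarith
      have h2 : γ*x+1-γ ≤ r*x+1-r := by nlinarith
      exact f_mono h1 (le_trans h1 h2) h2
    · have h1 : 0 < r*x+1-r := by nlinarith
      have h2 : r*x+1-r ≤ γ*x+1-γ := by nlinarith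
      have h3 : γ*x+1-γ ≤ 1 := by nlinarith
      exact f_anti ⟨h1, le_trans h2 h3⟩ ⟨lt_of_lt_of_le h1 h2, h3⟩ h2
  calc (x * Real.log x - x + 1) * ((1-γ) * Real.log (1-γ) - (1-γ) + 1)
      = ((1-γ) * Real.log (1-γ) - (1-γ) + 1) * (x * Real.log x - x + 1) := by ring
    _ ≤ (γ*x+1-γ) * Real.log (γ*x+1-γ) - (γ*x+1-γ) + 1 := hkey
    _ ≤ (r*x+1-r) * Real.log (r*x+1-r) - (r*x+1-r) + 1 := hmid
end

section
/- Let f(x) = x·log x - x + 1. Then the function γ ↦ (-log(1-γ)) / f(1-γ) on (0,1) attains values arbitrarily close to its infimum h₀, and h₀ satisfies 3 < h₀ < 4. Equivalently: there exists γ ∈ (0,1) with (-log(1-γ)) / (γ + (1-γ)·log(1-γ)) < 4, and for all γ ∈ (0,1), (-log(1-γ)) / (γ + (1-γ)·log(1-γ)) > 3. -/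
lemma exp_mul_sub_two_ge (t : ℝ) : -Real.exp 1 ≤ Real.exp t * (t - 2) := by
  have h := Real.add_one_le_exp (1 - t)
  have hx : (0:ℝ) < Real.exp (t - 1) := Real.exp_pos _
  have hprod : Real.exp (t - 1) * Real.exp (1 - t) = 1 := by
    rw [← Real.exp_add]; norm_num
  have hsplit : Real.exp t = Real.exp (t - 1) * Real.exp 1 := by
    rw [← Real.exp_add]; norm_num
  have hmul : Real.exp (t - 1) * (2 - t) ≤ 1 := by
    calc Real.exp (t - 1) * (2 - t) = Real.exp (t - 1) * (1 - t + 1) := by ring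
      _ ≤ Real.exp (t - 1) * Real.exp (1 - t) := mul_le_mul_of_nonneg_left h hx.le
      _ = 1 := hprod
  nlinarith [mul_le_mul_of_nonneg_left hmul (Real.exp_pos 1).le]

lemma H_pos {t : ℝ} (ht : 0 < t) :
    0 < t * Real.exp t - 3 * Real.exp t + 3 * t + 3 := by
  set H : ℝ → ℝ := fun s => s * Real.exp s - 3 * Real.exp s + 3 * s + 3 with hH
  have hderiv : ∀ s : ℝ, HasDerivAt H (Real.exp s * (s - 2) + 3) s := by
    intro s
    have h1 : HasDerivAt (fun u : ℝ => u * Real.exp u)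
        (1 * Real.exp s + s * Real.exp s) s :=
      (hasDerivAt_id s).mul (Real.hasDerivAt_exp s)
    have h2 : HasDerivAt (fun u : ℝ => 3 * Real.exp u) (3 * Real.exp s) s :=
      (Real.hasDerivAt_exp s).const_mul 3
    have h3 : HasDerivAt (fun u : ℝ => 3 * u + 3) 3 s := by
      simpa using ((hasDerivAt_id s).const_mul 3).add_const 3
    have := (h1.sub h2).add h3
    have e : H = (((fun u : ℝ => u * Real.exp u) - fun u => 3 * Real.exp u) + fun u => 3 * u + 3) := by
      funext x; simp only [hH, Pi.add_apply, Pi.sub_apply]; ring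
    rw [e]; exact this.congr_deriv (by ring)
  have hmono : StrictMonoOn H (Set.Ici (0:ℝ)) := by
    apply strictMonoOn_of_deriv_pos (convex_Ici 0)
    · exact fun s _ => (hderiv s).continuousAt.continuousWithinAt
    · intro s hs
      rw [(hderiv s).deriv]
      have := exp_mul_sub_two_ge s
      have he : Real.exp 1 < 3 := by
        have := Real.exp_one_lt_d9
        linarith
      linarith
  have h0 : H 0 = 0 := by simp [hH]
  have := hmono (Set.self_mem_Ici) (Set.mem_Ici.mpr ht.le) ht
  simpa [h0] using this

lemma denom_pos {γ : ℝ} (h0 : 0 < γ) (h1 : γ < 1) :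
    0 < γ + (1 - γ) * Real.log (1 - γ) := by
  have hx : (0:ℝ) < 1 - γ := by linarith
  have hlog : Real.log ((1 - γ)⁻¹) < (1 - γ)⁻¹ - 1 := by
    apply Real.log_lt_sub_one_of_pos (by positivity)
    have : (1:ℝ) < (1 - γ)⁻¹ := by
      rw [lt_inv_comm₀ one_pos hx]; linarith
    exact ne_of_gt this
  rw [Real.log_inv] at hlog
  have h2 : (1 - γ) * (-Real.log (1 - γ)) < (1 - γ) * ((1 - γ)⁻¹ - 1) :=
    mul_lt_mul_of_pos_left hlog hx
  rw [mul_sub, mul_inv_cancel₀ hx.ne'] at h2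
  nlinarith

theorem h0_bounds :
    (∃ γ : ℝ, 0 < γ ∧ γ < 1 ∧
      (-Real.log (1 - γ)) / (γ + (1 - γ) * Real.log (1 - γ)) < 4) ∧
    (∀ γ : ℝ, 0 < γ → γ < 1 →
      (-Real.log (1 - γ)) / (γ + (1 - γ) * Real.log (1 - γ)) > 3) := by
  constructor
  · refine ⟨1 - Real.exp (-1), ?_, ?_, ?_⟩
    · have : Real.exp (-1) < 1 := Real.exp_lt_one_iff.mpr (by norm_num)
      linarith
    · have : 0 < Real.exp (-1) := Real.exp_pos _
      linarith
    · have hval : (1:ℝ) - (1 - Real.exp (-1)) = Real.exp (-1) := by ring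
      rw [hval, Real.log_exp]
      have he : Real.exp (-1) < 3/8 := by
        rw [Real.exp_neg]
        rw [inv_lt_comm₀ (Real.exp_pos 1) (by norm_num)]
        have := Real.exp_one_gt_d9
        linarith
      have hepos : 0 < Real.exp (-1) := Real.exp_pos _
      rw [div_lt_iff₀ (by nlinarith)]
      nlinarith
  · intro γ h0 h1
    have hx : (0:ℝ) < 1 - γ := by linarith
    have hD := denom_pos h0 h1
    rw [gt_iff_lt, lt_div_iff₀ hD]
    -- use H_pos with t = -log(1-γ)
    set t := -Real.log (1 - γ) with hT
    have htpos : 0 < t := by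
      have : Real.log (1 - γ) < 0 := Real.log_neg hx (by linarith)
      simpa [hT] using neg_pos.mpr this
    have hexp : Real.exp t = (1 - γ)⁻¹ := by
      rw [hT, Real.exp_neg, Real.exp_log hx]
    have hH := H_pos htpos
    rw [hexp] at hH
    have hinv : (1 - γ) * (1 - γ)⁻¹ = 1 := mul_inv_cancel₀ hx.ne'
    have hlog : Real.log (1 - γ) = -t := by rw [hT]; ring
    rw [hlog]
    -- multiply hH by (1-γ) > 0
    nlinarith [mul_pos hx hH]
end

section
/- Let d ≥ 2. Define h(z) = z·log z + (d-z)·log((d-z)/(d-1)) and g(z) = -log z - (d-1)·log((d-z)/(d-1)) for z ∈ (1,d), and let m_d(y) = g(h⁻¹(y)) for y in the range of h. Then the derivative satisfies m_d'(y) = d·(1 - z⁻¹)/(d·log z - y) > 1/z ≥ 1/d, where z = h⁻¹(y). -/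
theorem m_d_deriv (d : ℝ) (hd : 2 ≤ d)
    (g h : ℝ → ℝ)
    (hg : ∀ z, g z = -Real.log z - (d - 1) * Real.log ((d - z) / (d - 1)))
    (hh : ∀ z, h z = z * Real.log z + (d - z) * Real.log ((d - z) / (d - 1)))
    (z : ℝ) (hz : z ∈ Set.Ioo 1 d) :
    HasDerivAt (fun y => g (Function.invFunOn h (Set.Ioo 1 d) y))
      (d * (1 - z⁻¹) / (d * Real.log z - h z)) (h z) ∧
    1 / z < d * (1 - z⁻¹) / (d * Real.log z - h z) ∧
    1 / d ≤ 1 / z := by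
  obtain ⟨hz1, hzd⟩ := hz
  have hd1 : (1 : ℝ) < d := by linarith
  have hz0 : (0 : ℝ) < z := by linarith
  have hdz : (0 : ℝ) < d - z := by linarith
  have hd1' : (0 : ℝ) < d - 1 := by linarith
  set S := Set.Ioo (1 : ℝ) d with hS
  have hzS : z ∈ S := ⟨hz1, hzd⟩
  -- derivative of h on S
  have derivH : ∀ x ∈ S, HasDerivAt h
      (Real.log x - Real.log ((d - x) / (d - 1))) x := by
    intro x hx
    obtain ⟨hx1, hxd⟩ := hx
    have hx0 : (0 : ℝ) < x := by linarith
    have hdx : (0 : ℝ) < d - x := by linarith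
    have hu0 : (0 : ℝ) < (d - x) / (d - 1) := div_pos hdx hd1'
    have hH : h = fun x => x * Real.log x + (d - x) * Real.log ((d - x) / (d - 1)) :=
      funext hh
    rw [hH]
    have h1 : HasDerivAt (fun x : ℝ => x * Real.log x) (1 * Real.log x + x * x⁻¹) x :=
      (hasDerivAt_id x).mul (Real.hasDerivAt_log hx0.ne')
    have hu : HasDerivAt (fun x : ℝ => (d - x) / (d - 1)) (-1 / (d - 1)) x :=
      (((hasDerivAt_id x).const_sub d).div_const (d - 1))
    have hlogu : HasDerivAt (fun x : ℝ => Real.log ((d - x) / (d - 1)))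
        (((d - x) / (d - 1))⁻¹ * (-1 / (d - 1))) x :=
      HasDerivAt.comp (h₂ := Real.log) x (Real.hasDerivAt_log hu0.ne') hu
    have h2 : HasDerivAt (fun x : ℝ => (d - x) * Real.log ((d - x) / (d - 1)))
        ((-1) * Real.log ((d - x) / (d - 1)) +
          (d - x) * (((d - x) / (d - 1))⁻¹ * (-1 / (d - 1)))) x :=
      (((hasDerivAt_id x).const_sub d)).mul hlogu
    have := h1.add h2
    convert this using 1
    all_goals try rfl
    field_simp
    ring
  have cont : ContinuousOn h S := fun x hx =>
    (derivH x hx).continuousAt.continuousWithinAt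
  have hmono : StrictMonoOn h S := by
    apply strictMonoOn_of_deriv_pos (convex_Ioo 1 d) cont
    intro x hx
    rw [interior_Ioo] at hx
    obtain ⟨hx1, hxd⟩ := hx
    rw [(derivH x ⟨hx1, hxd⟩).deriv]
    have hl1 : 0 < Real.log x := Real.log_pos hx1
    have hl2 : Real.log ((d - x) / (d - 1)) < 0 :=
      Real.log_neg (div_pos (by linarith) hd1')
        ((div_lt_one hd1').mpr (by linarith))
    linarith
  have hinj : Set.InjOn h S := hmono.injOn
  set φ := Function.invFunOn h S with hφ
  have hφz : φ (h z) = z := hinj.leftInvOn_invFunOn hzS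
  -- auxiliary interval
  set a := (1 + z) / 2 with ha
  set b := (z + d) / 2 with hb
  have haS : a ∈ S := ⟨by simp only [ha]; linarith, by simp only [ha]; linarith⟩
  have hbS : b ∈ S := ⟨by simp only [hb]; linarith, by simp only [hb]; linarith⟩
  have hab : a < b := by simp only [ha, hb]; linarith
  have haz : a < z := by simp only [ha]; linarith
  have hzb : z < b := by simp only [hb]; linarith
  have hIcc : Set.Icc a b ⊆ S := by
    intro x hx
    exact ⟨lt_of_lt_of_le haS.1 hx.1, lt_of_le_of_lt hx.2 hbS.2⟩
  have key : Set.Icc (h a) (h b) ⊆ h '' Set.Icc a b :=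
    intermediate_value_Icc hab.le (cont.mono hIcc)
  have himg : Set.Ioo (h a) (h b) ⊆ h '' S := fun y hy =>
    Set.image_mono hIcc (key ⟨hy.1.le, hy.2.le⟩)
  have hnhds : Set.Ioo (h a) (h b) ∈ nhds (h z) :=
    isOpen_Ioo.mem_nhds ⟨hmono haS hzS haz, hmono hzS hbS hzb⟩
  have hev : ∀ᶠ y in nhds (h z), h (φ y) = y := by
    filter_upwards [hnhds] with y hy
    obtain ⟨x, hxS, hxy⟩ := himg hy
    exact Function.invFunOn_eq ⟨x, hxS, hxy⟩
  -- continuity of φ at h z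
  have hφmono : StrictMonoOn φ (h '' S) := by
    rintro y1 ⟨x1, hx1, rfl⟩ y2 ⟨x2, hx2, rfl⟩ hlt
    rw [hφ] at *
    rw [hinj.leftInvOn_invFunOn hx1, hinj.leftInvOn_invFunOn hx2]
    exact (hmono.lt_iff_lt hx1 hx2).mp hlt
  have hφcont : ContinuousAt φ (h z) := by
    apply hφmono.continuousAt_of_image_mem_nhds
      (Filter.mem_of_superset hnhds himg)
    rw [hinj.invFunOn_image (subset_refl S), hφz]
    exact isOpen_Ioo.mem_nhds hzS
  -- derivative of φ
  have hl1 : 0 < Real.log z := Real.log_pos hz1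
  have hl2 : Real.log ((d - z) / (d - 1)) < 0 :=
    Real.log_neg (div_pos hdz hd1') ((div_lt_one hd1').mpr (by linarith))
  set h' := Real.log z - Real.log ((d - z) / (d - 1)) with hh'
  have hh'pos : 0 < h' := by rw [hh']; linarith
  have hinv : HasDerivAt φ h'⁻¹ (h z) :=
    HasDerivAt.of_local_left_inverse hφcont (by rw [hφz]; exact derivH z hzS) hh'pos.ne' hev
  -- derivative of g at z
  have hg0 : (0 : ℝ) < (d - z) / (d - 1) := div_pos hdz hd1'
  have derivG : HasDerivAt g (-z⁻¹ + (d - 1) / (d - z)) z := by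
    have hG : g = fun x => -Real.log x - (d - 1) * Real.log ((d - x) / (d - 1)) :=
      funext hg
    rw [hG]
    have h1 : HasDerivAt (fun x : ℝ => -Real.log x) (-z⁻¹) z :=
      (Real.hasDerivAt_log hz0.ne').neg
    have hu : HasDerivAt (fun x : ℝ => (d - x) / (d - 1)) (-1 / (d - 1)) z :=
      (((hasDerivAt_id z).const_sub d).div_const (d - 1))
    have hlogu : HasDerivAt (fun x : ℝ => Real.log ((d - x) / (d - 1)))
        (((d - z) / (d - 1))⁻¹ * (-1 / (d - 1))) z :=
      HasDerivAt.comp (h₂ := Real.log) z (Real.hasDerivAt_log hg0.ne') hu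
    have h2 := hlogu.const_mul (d - 1)
    have := h1.sub h2
    convert this using 1
    all_goals try rfl
    field_simp
    ring
  -- key identity
  have hkey : d * Real.log z - h z = (d - z) * h' := by
    rw [hh z, hh']; ring
  have hDeq : (-z⁻¹ + (d - 1) / (d - z)) * h'⁻¹ =
      d * (1 - z⁻¹) / (d * Real.log z - h z) := by
    rw [hkey]
    field_simp
    ring
  constructor
  · have hG' : HasDerivAt g (-z⁻¹ + (d - 1) / (d - z)) (φ (h z)) := by
      rw [hφz]; exact derivG
    have := hG'.comp (h z) hinv
    rw [hDeq] at this
    exact this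
  constructor
  · rw [hkey]
    rw [div_lt_div_iff₀ hz0 (by positivity)]
    have hA : Real.log z < z - 1 := Real.log_lt_sub_one_of_pos hz0 hz1.ne'
    have hB : Real.log ((d - 1) / (d - z)) < (d - 1) / (d - z) - 1 :=
      Real.log_lt_sub_one_of_pos (div_pos hd1' hdz)
        (by
          intro hcon
          rw [div_eq_one_iff_eq hdz.ne'] at hcon
          linarith)
    have hL2 : Real.log ((d - z) / (d - 1)) = -Real.log ((d - 1) / (d - z)) := by
      rw [← Real.log_inv]
      congr 1
      field_simp
    have hB' : (d - z) * (-Real.log ((d - z) / (d - 1))) < (d - 1) - (d - z) := by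
      rw [hL2, neg_neg]
      have := (mul_lt_mul_iff_right₀ hdz).mpr hB
      calc (d - z) * Real.log ((d - 1) / (d - z)) <
            (d - z) * ((d - 1) / (d - z) - 1) := this
        _ = (d - 1) - (d - z) := by field_simp
    have hA' : (d - z) * Real.log z < (d - z) * (z - 1) :=
      (mul_lt_mul_iff_right₀ hdz).mpr hA
    have hz1' : 0 < z - 1 := by linarith
    have hf : (1 : ℝ) * ((d - z) * h') < d * (1 - z⁻¹) * z := by
      have hgoal : (d - z) * h' < d * (z - 1) := by
        rw [hh']
        nlinarith [sq_nonneg (z - 1)]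
      have : d * (1 - z⁻¹) * z = d * (z - 1) := by field_simp
      rw [this, one_mul]
      exact hgoal
    linarith
  · exact one_div_le_one_div_of_le hz0 hzd.le
end

section
/- Let d ≥ 2 and define m_d(y) = g(h⁻¹(y)) with g(z) = -log z - (d-1)·log((d-z)/(d-1)) and h(z) = z·log z + (d-z)·log((d-z)/(d-1)) on (1,d). Then lim_{y → 0⁺} m_d(y)/y = 1. -/
open Real Filter Set Function Topology

theorem m_d_tendsto_one (d : ℝ) (hd : 2 ≤ d)
    (g h : ℝ → ℝ)
    (hg : ∀ z, g z = -Real.log z - (d - 1) * Real.log ((d - z) / (d - 1)))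
    (hh : ∀ z, h z = z * Real.log z + (d - z) * Real.log ((d - z) / (d - 1))) :
    Filter.Tendsto (fun y => g (Function.invFunOn h (Set.Ioo 1 d) y) / y)
      (nhdsWithin 0 (Set.Ioi 0)) (nhds 1) := by
  have hd1 : (1:ℝ) < d := by linarith
  have hd1' : (0:ℝ) < d - 1 := by linarith
  have hd1'' : d - 1 ≠ 0 := ne_of_gt hd1'
  set G : ℝ → ℝ := fun z => -z⁻¹ + (d - 1) * (d - z)⁻¹ with hGdef
  set H : ℝ → ℝ := fun z => Real.log z - Real.log ((d - z) / (d - 1)) with hHdef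
  -- derivative of the log term
  have hlogD : ∀ z ∈ Set.Ioo (0:ℝ) d,
      HasDerivAt (fun z : ℝ => Real.log ((d - z) / (d - 1))) (-(d - z)⁻¹) z := by
    rintro z ⟨hz0, hzd⟩
    have hdz : 0 < d - z := by linarith
    have hw : HasDerivAt (fun z : ℝ => (d - z) / (d - 1)) (-(d - 1)⁻¹) z := by
      have h0 : HasDerivAt (fun z : ℝ => d - z) (-1) z := by
        simpa using (hasDerivAt_id z).const_sub d
      have := h0.div_const (d - 1)
      simpa [neg_div, div_eq_mul_inv] using this
    have harg : (d - z) / (d - 1) ≠ 0 := by positivity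
    have := (Real.hasDerivAt_log harg).comp z hw
    refine this.congr_deriv ?_
    field_simp
  have hasDerivAt_h : ∀ z ∈ Set.Ioo (0:ℝ) d, HasDerivAt h (H z) z := by
    rintro z hz
    obtain ⟨hz0, hzd⟩ := hz
    have hdz : 0 < d - z := by linarith
    have h1 : HasDerivAt (fun z : ℝ => z * Real.log z) (Real.log z + 1) z :=
      Real.hasDerivAt_mul_log (ne_of_gt hz0)
    have hdz' : HasDerivAt (fun z : ℝ => d - z) (-1) z := by
      simpa using (hasDerivAt_id z).const_sub d
    have h2 := hdz'.mul (hlogD z ⟨hz0, hzd⟩)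
    have heq : h = fun z => z * Real.log z + (d - z) * Real.log ((d - z) / (d - 1)) :=
      funext hh
    rw [heq]
    have := h1.add h2
    refine this.congr_deriv ?_
    simp [hHdef]
    field_simp
    ring
  have hasDerivAt_g : ∀ z ∈ Set.Ioo (0:ℝ) d, HasDerivAt g (G z) z := by
    rintro z hz
    obtain ⟨hz0, hzd⟩ := hz
    have h1 : HasDerivAt (fun z : ℝ => -Real.log z) (-z⁻¹) z :=
      (Real.hasDerivAt_log (ne_of_gt hz0)).neg
    have h2 := ((hlogD z ⟨hz0, hzd⟩).const_mul (d - 1))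
    have heq : g = fun z => -Real.log z - (d - 1) * Real.log ((d - z) / (d - 1)) :=
      funext hg
    rw [heq]
    have := h1.sub h2
    refine this.congr_deriv ?_
    simp [hGdef]
  -- global continuity of h
  have hcont : Continuous h := by
    have heq : h = fun z => z * Real.log z +
        (d - 1) * (((d - z) / (d - 1)) * Real.log ((d - z) / (d - 1))) := by
      funext z
      rw [hh]
      field_simp
    rw [heq]
    exact Real.continuous_mul_log.add (continuous_const.mul
      (Real.continuous_mul_log.comp ((continuous_const.sub continuous_id).div_const (d - 1))))
  have h1val : h 1 = 0 := by
    rw [hh]; simp [div_self hd1'']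
  have g1val : g 1 = 0 := by
    rw [hg]; simp [div_self hd1'']
  -- positivity of H on (1,d)
  have hHpos : ∀ z ∈ Set.Ioo (1:ℝ) d, 0 < H z := by
    rintro z ⟨hz1, hzd⟩
    have hdz : 0 < d - z := by linarith
    have harg : 0 < (d - z) / (d - 1) := by positivity
    have hlt : (d - z) / (d - 1) < z := by
      rw [div_lt_iff₀ hd1']
      nlinarith
    have := Real.log_lt_log harg hlt
    simpa [hHdef, sub_pos] using this
  -- strict monotonicity of h on [1, d)
  have hmono : StrictMonoOn h (Set.Ico 1 d) := by
    apply strictMonoOn_of_deriv_pos (convex_Ico 1 d) hcont.continuousOn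
    intro z hz
    rw [interior_Ico] at hz
    rw [(hasDerivAt_h z ⟨by linarith [hz.1], hz.2⟩).deriv]
    exact hHpos z hz
  have hpos : ∀ z ∈ Set.Ioo (1:ℝ) d, 0 < h z := by
    rintro z hz
    have := hmono (left_mem_Ico.mpr hd1) ⟨le_of_lt hz.1, hz.2⟩ hz.1
    rwa [h1val] at this
  set c : ℝ := (1 + d) / 2 with hcdef
  have hc1 : 1 < c := by rw [hcdef]; linarith
  have hcd : c < d := by rw [hcdef]; linarith
  have hcmem : c ∈ Set.Ioo (1:ℝ) d := ⟨hc1, hcd⟩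
  have hcpos : 0 < h c := hpos c hcmem
  set φ : ℝ → ℝ := Function.invFunOn h (Set.Ioo 1 d) with hφdef
  -- specification of φ on (0, h c)
  have hspec : ∀ y ∈ Set.Ioo 0 (h c), φ y ∈ Set.Ioo 1 d ∧ h (φ y) = y := by
    rintro y ⟨hy0, hyc⟩
    have htend : Tendsto h (𝓝[>] (1:ℝ)) (𝓝 0) := by
      rw [← h1val]
      exact (hcont.tendsto 1).mono_left nhdsWithin_le_nhds
    have hev1 : ∀ᶠ z in 𝓝[>] (1:ℝ), h z < y := htend (Iio_mem_nhds hy0)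
    have hev2 : Set.Ioo (1:ℝ) c ∈ 𝓝[>] (1:ℝ) :=
      Ioo_mem_nhdsGT_of_mem ⟨le_refl 1, hc1⟩
    obtain ⟨z1, hz1y, hz1mem⟩ := (hev1.and (eventually_of_mem hev2 fun z hz => hz)).exists
    have hsub : Set.Icc z1 c ⊆ Set.Icc (1:ℝ) d := by
      intro w hw
      exact ⟨le_trans (le_of_lt hz1mem.1) hw.1, le_trans hw.2 (le_of_lt hcd)⟩
    have hivt := intermediate_value_Icc (le_of_lt hz1mem.2) (hcont.continuousOn (s := Set.Icc z1 c))
    have hymem : y ∈ Set.Icc (h z1) (h c) := ⟨le_of_lt hz1y, le_of_lt hyc⟩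
    obtain ⟨z, hzmem, hzy⟩ := hivt hymem
    have hzIoo : z ∈ Set.Ioo (1:ℝ) d :=
      ⟨lt_of_lt_of_le hz1mem.1 hzmem.1, lt_of_le_of_lt hzmem.2 hcd⟩
    have hex : ∃ a ∈ Set.Ioo (1:ℝ) d, h a = y := ⟨z, hzIoo, hzy⟩
    exact ⟨Function.invFunOn_mem hex, Function.invFunOn_eq hex⟩
  -- upper bound for φ
  have hlt : ∀ y ∈ Set.Ioo 0 (h c), ∀ w ∈ Set.Ico (1:ℝ) d, y < h w → φ y < w := by
    rintro y hy w hw hyw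
    by_contra hcon
    push_neg at hcon
    obtain ⟨hφmem, hφval⟩ := hspec y hy
    have : h w ≤ h (φ y) :=
      hmono.monotoneOn hw ⟨le_of_lt hφmem.1, hφmem.2⟩ hcon
    rw [hφval] at this
    linarith [hy.1, hyw]
  -- φ tends to 1 from the right
  have hφtend : Tendsto φ (𝓝[>] (0:ℝ)) (𝓝[>] (1:ℝ)) := by
    rw [tendsto_nhdsWithin_iff]
    have hbase : Set.Ioo (0:ℝ) (h c) ∈ 𝓝[>] (0:ℝ) :=
      Ioo_mem_nhdsGT_of_mem ⟨le_refl 0, hcpos⟩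
    constructor
    · rw [tendsto_order]
      constructor
      · intro a ha
        filter_upwards [hbase] with y hy
        exact lt_trans ha (hspec y hy).1.1
      · intro a ha
        set b : ℝ := min ((1 + a) / 2) c with hbdef
        have hb1 : 1 < b := lt_min (by linarith) hc1
        have hbd : b < d := lt_of_le_of_lt (min_le_right _ _) hcd
        have hba : b < a := lt_of_le_of_lt (min_le_left _ _) (by linarith)
        have hbpos : 0 < h b := hpos b ⟨hb1, hbd⟩
        have hsmall : Set.Ioo (0:ℝ) (min (h b) (h c)) ∈ 𝓝[>] (0:ℝ) :=
          Ioo_mem_nhdsGT_of_mem ⟨le_refl 0, lt_min hbpos hcpos⟩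
        filter_upwards [hsmall] with y hy
        have hyc : y ∈ Set.Ioo 0 (h c) := ⟨hy.1, lt_of_lt_of_le hy.2 (min_le_right _ _)⟩
        have : φ y < b := hlt y hyc b ⟨le_of_lt hb1, hbd⟩
          (lt_of_lt_of_le hy.2 (min_le_left _ _))
        linarith
    · filter_upwards [hbase] with y hy
      exact (hspec y hy).1.1
  -- slope limits at 1
  have hk : d / (d - 1) ≠ 0 := by positivity
  have hG1 : G 1 = 0 := by
    simp only [hGdef]
    field_simp
    norm_num
  have hH1 : H 1 = 0 := by
    simp only [hHdef]
    simp [div_self hd1'']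
  have hGderiv : HasDerivAt G (d / (d - 1)) 1 := by
    have h1 : HasDerivAt (fun z : ℝ => -z⁻¹) ((1:ℝ)) 1 := by
      have := (hasDerivAt_inv (one_ne_zero (α := ℝ))).neg
      exact this.congr_deriv (by norm_num)
    have hdz' : HasDerivAt (fun z : ℝ => d - z) (-1) (1:ℝ) := by
      simpa using (hasDerivAt_id (1:ℝ)).const_sub d
    have h2 : HasDerivAt (fun z : ℝ => (d - z)⁻¹) (((d - 1) ^ 2)⁻¹) 1 := by
      have := (hasDerivAt_inv hd1'').comp (1:ℝ) hdz'
      refine this.congr_deriv ?_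
      ring
    have h3 := h1.add (h2.const_mul (d - 1))
    refine h3.congr_deriv ?_
    field_simp
    ring
  have hHderiv : HasDerivAt H (d / (d - 1)) 1 := by
    have h1 : HasDerivAt Real.log ((1:ℝ)) 1 := by
      simpa using Real.hasDerivAt_log (one_ne_zero (α := ℝ))
    have h2 := hlogD 1 ⟨one_pos, hd1⟩
    have h3 := h1.sub h2
    refine h3.congr_deriv ?_
    field_simp
    ring
  have hne1 : 𝓝[>] (1:ℝ) ≤ 𝓝[≠] (1:ℝ) :=
    nhdsWithin_mono 1 (fun x hx => ne_of_gt hx)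
  have hslopeG : Tendsto (fun z => G z / (z - 1)) (𝓝[>] (1:ℝ)) (𝓝 (d / (d - 1))) := by
    have := (hasDerivAt_iff_tendsto_slope.mp hGderiv).mono_left hne1
    refine this.congr fun z => ?_
    rw [slope_def_field, hG1, sub_zero]
  have hslopeH : Tendsto (fun z => H z / (z - 1)) (𝓝[>] (1:ℝ)) (𝓝 (d / (d - 1))) := by
    have := (hasDerivAt_iff_tendsto_slope.mp hHderiv).mono_left hne1
    refine this.congr fun z => ?_
    rw [slope_def_field, hH1, sub_zero]
  have hdiv : Tendsto (fun z => G z / H z) (𝓝[>] (1:ℝ)) (𝓝 1) := by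
    have := hslopeG.div hslopeH hk
    rw [div_self hk] at this
    refine this.congr' ?_
    filter_upwards [self_mem_nhdsWithin] with z (hz : z ∈ Set.Ioi (1:ℝ))
    have hz1 : z - 1 ≠ 0 := sub_ne_zero.mpr (ne_of_gt hz)
    simp only [Pi.div_apply]
    rw [div_div_div_comm, div_self hz1, div_one]
  have hIoo : Set.Ioo (1:ℝ) d ∈ 𝓝[>] (1:ℝ) := Ioo_mem_nhdsGT_of_mem ⟨le_refl 1, hd1⟩
  -- continuity of g at 1
  have hgcont : ContinuousAt g 1 := by
    have heq : g = fun z => -Real.log z - (d - 1) * Real.log ((d - z) / (d - 1)) :=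
      funext hg
    rw [heq]
    have hin : ContinuousAt (fun z : ℝ => (d - z) / (d - 1)) 1 := by fun_prop
    have harg : ((d : ℝ) - 1) / (d - 1) ≠ 0 := by
      rw [div_self hd1'']; exact one_ne_zero
    have hlogc : ContinuousAt Real.log ((fun z : ℝ => (d - z) / (d - 1)) 1) := by
      show ContinuousAt Real.log ((d - 1) / (d - 1))
      exact Real.continuousAt_log harg
    have h2 : ContinuousAt (fun z : ℝ => Real.log ((d - z) / (d - 1))) 1 :=
      ContinuousAt.comp (g := Real.log) (f := fun z : ℝ => (d - z) / (d - 1)) (x := 1)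
        hlogc hin
    exact ((Real.continuousAt_log one_ne_zero).neg).sub (continuousAt_const.mul h2)
  have hgz : Tendsto g (𝓝[>] (1:ℝ)) (𝓝 0) := by
    rw [← g1val]
    exact hgcont.tendsto.mono_left nhdsWithin_le_nhds
  have hhz : Tendsto h (𝓝[>] (1:ℝ)) (𝓝 0) := by
    rw [← h1val]
    exact (hcont.tendsto 1).mono_left nhdsWithin_le_nhds
  -- L'Hopital
  have hzlim : Tendsto (fun z => g z / h z) (𝓝[>] (1:ℝ)) (𝓝 1) := by
    refine HasDerivAt.lhopital_zero_nhdsGT ?_ ?_ ?_ hgz hhz hdiv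
    · filter_upwards [hIoo] with z hz
      exact hasDerivAt_g z ⟨lt_trans one_pos hz.1, hz.2⟩
    · filter_upwards [hIoo] with z hz
      exact hasDerivAt_h z ⟨lt_trans one_pos hz.1, hz.2⟩
    · filter_upwards [hIoo] with z hz
      exact ne_of_gt (hHpos z hz)
  -- assemble
  have hcomp : Tendsto (fun y => g (φ y) / h (φ y)) (𝓝[>] (0:ℝ)) (𝓝 1) :=
    hzlim.comp hφtend
  refine hcomp.congr' ?_
  filter_upwards [Ioo_mem_nhdsGT_of_mem ⟨le_refl (0:ℝ), hcpos⟩] with y hy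
  rw [(hspec y hy).2]
end
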